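/- If 1 < β < (1+√5)/2, then the set of (-β)-integers is trivial: Z_{-β} = {0}. -/

import Mathlib

/-- The `(-β)`-transformation `x ↦ -βx - ⌊β/(β+1) - βx⌋`. -/
noncomputable def Tm (β : ℝ) (x : ℝ) : ℝ := -β * x - ⌊β / (β + 1) - β * x⌋

/-- The set of `(-β)`-integers `Z_{-β} = ⋃_{n≥0} (-β)^n T_{-β}^{-n}(0)`. -/
noncomputable def Zm (β : ℝ) : Set ℝ :=
  {x | ∃ n : ℕ, x / (-β) ^ n ∈ Set.Ico (-β / (β + 1)) (1 / (β + 1)) ∧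
    (Tm β)^[n] (x / (-β) ^ n) = 0}

lemma Tm_mem (β : ℝ) (hβ : 1 < β) (x : ℝ) :
    Tm β x ∈ Set.Ico (-β / (β + 1)) (1 / (β + 1)) := by
  have hb1 : (0:ℝ) < β + 1 := by linarith
  have key : Tm β x = Int.fract (β / (β + 1) - β * x) - β / (β + 1) := by
    rw [Int.fract]; unfold Tm; ring
  have h0 := Int.fract_nonneg (β / (β + 1) - β * x)
  have h1 := Int.fract_lt_one (β / (β + 1) - β * x)
  have hneg : -β / (β + 1) = -(β / (β + 1)) := neg_div _ _
  constructor
  · rw [key, hneg]; linarith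
  · rw [key]
    have : 1 / (β + 1) = 1 - β / (β + 1) := by field_simp; ring
    rw [this]; linarith

lemma step (β : ℝ) (hβ : 1 < β) (hsq : β ^ 2 < β + 1) (y : ℝ)
    (hy : y ∈ Set.Ico (-β / (β + 1)) (1 / (β + 1))) (h : Tm β y = 0) : y = 0 := by
  have hb1 : (0:ℝ) < β + 1 := by linarith
  have hm : (⌊β / (β + 1) - β * y⌋ : ℝ) = -β * y := by
    unfold Tm at h; linarith
  obtain ⟨hy1, hy2⟩ := hy
  have hlo : -β / (β + 1) ≤ y := hy1
  have hhi : y < 1 / (β + 1) := hy2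
  -- bounds on -β*y
  have h1 : -β * y ≤ β ^ 2 / (β + 1) := by
    have := mul_le_mul_of_nonneg_left hlo (le_of_lt (by linarith : (0:ℝ) < β))
    have : β * (-β / (β + 1)) ≤ β * y := this
    have heq : β * (-β / (β + 1)) = -(β ^ 2 / (β + 1)) := by ring
    nlinarith
  have h2 : -(β / (β + 1)) < -β * y := by
    have := mul_lt_mul_of_pos_left hhi (by linarith : (0:ℝ) < β)
    have heq : β * (1 / (β + 1)) = β / (β + 1) := by ring
    nlinarith
  have hub : β ^ 2 / (β + 1) < 1 := by rw [div_lt_one hb1]; linarith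
  have hlb : (-1:ℝ) < -(β / (β + 1)) := by
    rw [neg_lt_neg_iff, div_lt_one hb1]; linarith
  have hmz : ⌊β / (β + 1) - β * y⌋ = 0 := by
    have hlt : (⌊β / (β + 1) - β * y⌋ : ℝ) < 1 := by rw [hm]; linarith
    have hgt : (-1:ℝ) < (⌊β / (β + 1) - β * y⌋ : ℝ) := by rw [hm]; linarith
    have := Int.lt_iff_add_one_le.mp (by exact_mod_cast hlt : ⌊β / (β + 1) - β * y⌋ < 1)
    have h2' : (-1:ℤ) < ⌊β / (β + 1) - β * y⌋ := by exact_mod_cast hgt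
    omega
  rw [hmz] at hm
  simp at hm
  rcases hm with hm | hm
  · linarith
  · exact hm

lemma iter_zero (β : ℝ) (hβ : 1 < β) (hsq : β ^ 2 < β + 1) :
    ∀ n (y : ℝ), y ∈ Set.Ico (-β / (β + 1)) (1 / (β + 1)) → (Tm β)^[n] y = 0 → y = 0 := by
  intro n
  induction n with
  | zero => intro y _ h; simpa using h
  | succ k ih =>
      intro y hy h
      rw [Function.iterate_succ_apply] at h
      have := ih (Tm β y) (Tm_mem β hβ y) h
      exact step β hβ hsq y hy this

theorem stmt_1 (β : ℝ) (hβ : 1 < β) (hβ' : β < (1 + Real.sqrt 5) / 2) :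
    Zm β = {0} := by
  have hs : Real.sqrt 5 ^ 2 = 5 := Real.sq_sqrt (by norm_num)
  have hs0 : (0:ℝ) ≤ Real.sqrt 5 := Real.sqrt_nonneg 5
  have hsq : β ^ 2 < β + 1 := by nlinarith
  have hb1 : (0:ℝ) < β + 1 := by linarith
  ext x
  simp only [Zm, Set.mem_setOf_eq, Set.mem_singleton_iff]
  constructor
  · rintro ⟨n, hmem, hiter⟩
    have hy := iter_zero β hβ hsq n _ hmem hiter
    have hne : (-β) ^ n ≠ 0 := pow_ne_zero n (by intro h; rw [neg_eq_zero] at h; linarith)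
    field_simp at hy
    simpa using hy
  · rintro rfl
    have hd : (0:ℝ) ≤ β / (β + 1) := div_nonneg (by linarith) (le_of_lt hb1)
    have hneg : -β / (β + 1) = -(β / (β + 1)) := neg_div _ _
    refine ⟨0, ⟨?_, ?_⟩, by simp⟩
    · simp only [pow_zero, div_one, zero_div]
      rw [hneg]; linarith
    · simp only [pow_zero, div_one, zero_div]
      positivity
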